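/- Let Ω be a measurable space, 𝒬 a nonempty set of probability measures on Ω, Y : Ω → ℝ^d measurable, D ⊆ ℝ^d a vector subspace containing the support information of Y (i.e., P(Y ∈ D) = 1 for all P ∈ 𝒬), and suppose that for every nonzero h ∈ D there exists P ∈ 𝒬 with P(hY ≥ 0) < 1. Then the quantitative no-arbitrage bound holds: there exists α ∈ (0,1] such that for every h ∈ D there exists P_h ∈ 𝒬 with P_h(hY/|h| < -α) > α (for h ≠ 0). -/

import Mathlib

open Set MeasureTheory Filter Topology

/-- quantitative no-arbitrage characterisation. If `P(Y ∈ D) = 1` for all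
`P ∈ 𝒬` and for every nonzero `h ∈ D` some `P ∈ 𝒬` has `P(h⬝Y ≥ 0) < 1`, then there
is `α ∈ (0,1]` such that every nonzero `h ∈ D` admits `P_h ∈ 𝒬` with
`P_h(h⬝Y/|h| < -α) > α`. -/
theorem quantitative_no_arbitrage
    {d : ℕ} {Ω : Type*} [MeasurableSpace Ω]
    (Y : Ω → EuclideanSpace ℝ (Fin d)) (hY : Measurable Y)
    (𝒬 : Set (Measure Ω)) (h𝒬ne : 𝒬.Nonempty)
    (h𝒬prob : ∀ P ∈ 𝒬, IsProbabilityMeasure P)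
    (D : Submodule ℝ (EuclideanSpace ℝ (Fin d)))
    (hsupp : ∀ P ∈ 𝒬, P {ω | Y ω ∈ D} = 1)
    (hNA : ∀ h ∈ D, h ≠ 0 → ∃ P ∈ 𝒬, P {ω | 0 ≤ (inner ℝ h (Y ω) : ℝ)} < 1) :
    ∃ α : ℝ, 0 < α ∧ α ≤ 1 ∧
      ∀ h ∈ D, h ≠ 0 → ∃ P ∈ 𝒬,
        ENNReal.ofReal α < P {ω | (inner ℝ h (Y ω) : ℝ) / ‖h‖ < -α} := by
  by_contra hcon
  push_neg at hcon
  -- from the negation, for each `n` pick a unit vector `g n ∈ D` with small bad probability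
  have key : ∀ n : ℕ, ∃ g : EuclideanSpace ℝ (Fin d), g ∈ D ∧ ‖g‖ = 1 ∧
      ∀ P ∈ 𝒬, P {ω | (inner ℝ g (Y ω) : ℝ) < -(1/(n+1))} ≤ ENNReal.ofReal (1/(n+1)) := by
    intro n
    have hpos : (0:ℝ) < 1/(n+1) := by positivity
    have hle1 : (1:ℝ)/(n+1) ≤ 1 := by
      rw [div_le_one (by positivity)]
      simp [Nat.cast_nonneg]
    obtain ⟨h, hD, hne, hP⟩ := hcon (1/(n+1)) hpos hle1
    have hnorm : ‖h‖ ≠ 0 := norm_ne_zero_iff.mpr hne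
    refine ⟨‖h‖⁻¹ • h, D.smul_mem _ hD, ?_, ?_⟩
    · rw [norm_smul, norm_inv, norm_norm, inv_mul_cancel₀ hnorm]
    · intro P hPQ
      have hset : {ω | (inner ℝ (‖h‖⁻¹ • h) (Y ω) : ℝ) < -(1/(n+1))}
          = {ω | (inner ℝ h (Y ω) : ℝ) / ‖h‖ < -(1/(n+1))} := by
        ext ω
        simp only [mem_setOf_eq, real_inner_smul_left, div_eq_inv_mul]
      rw [hset]
      exact hP P hPQ
  choose g hgD hgnorm hgP using key
  have hg_sphere : ∀ n, g n ∈ Metric.sphere (0:EuclideanSpace ℝ (Fin d)) 1 := by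
    intro n; simp [mem_sphere_iff_norm, hgnorm]
  obtain ⟨h', hmem, φ, hφ, hconv⟩ :=
    (isCompact_sphere (0:EuclideanSpace ℝ (Fin d)) 1).tendsto_subseq hg_sphere
  have h'norm : ‖h'‖ = 1 := by simpa [mem_sphere_iff_norm] using hmem
  have h'ne : h' ≠ 0 := by
    intro h0; rw [h0, norm_zero] at h'norm; exact one_ne_zero h'norm.symm
  have h'D : h' ∈ D := by
    have : IsClosed (D : Set (EuclideanSpace ℝ (Fin d))) :=
      Submodule.closed_of_finiteDimensional D
    exact this.mem_of_tendsto hconv (Eventually.of_forall fun k => hgD (φ k))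
  -- the limit vector has zero bad probability under every measure
  have hnull : ∀ P ∈ 𝒬, P {ω | (inner ℝ h' (Y ω) : ℝ) < 0} = 0 := by
    intro P hPQ
    -- B k : events along the subsequence
    set B : ℕ → Set Ω := fun k => {ω | (inner ℝ (g (φ k)) (Y ω) : ℝ) < -(1/(φ k + 1))} with hB
    have hBsmall : ∀ k, P (B k) ≤ ENNReal.ofReal (1/(φ k + 1)) :=
      fun k => hgP (φ k) P hPQ
    -- measure of tail intersections is zero
    have htail : ∀ K : ℕ, P (⋂ k ∈ Ici K, B k) = 0 := by
      intro K
      have hle : ∀ k : ℕ, P (⋂ k ∈ Ici K, B k) ≤ ENNReal.ofReal (1/(k+1)) := by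
        intro k
        have hk : max k K ∈ Ici K := le_max_right k K
        calc P (⋂ k ∈ Ici K, B k) ≤ P (B (max k K)) :=
              measure_mono (biInter_subset_of_mem hk)
          _ ≤ ENNReal.ofReal (1/(φ (max k K) + 1)) := hBsmall (max k K)
          _ ≤ ENNReal.ofReal (1/(k+1)) := by
              apply ENNReal.ofReal_le_ofReal
              apply one_div_le_one_div_of_le (by positivity)
              have h1 : (k:ℝ) ≤ max k K := by exact_mod_cast le_max_left k K
              have h2 : ((max k K : ℕ):ℝ) ≤ (φ (max k K) : ℝ) := by
                exact_mod_cast hφ.le_apply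
              linarith
      have htend : Tendsto (fun k : ℕ => ENNReal.ofReal (1/(k+1))) atTop (𝓝 0) := by
        have : Tendsto (fun k : ℕ => (1:ℝ)/(k+1)) atTop (𝓝 0) :=
          tendsto_one_div_add_atTop_nhds_zero_nat
        simpa using (ENNReal.tendsto_ofReal this)
      have := ge_of_tendsto' htend hle
      exact le_antisymm this (by simp)
    -- decompose the bad set
    have hsub : {ω | (inner ℝ h' (Y ω) : ℝ) < 0} ⊆ ⋃ K : ℕ, ⋂ k ∈ Ici K, B k := by
      intro ω hω
      simp only [mem_setOf_eq] at hω
      set c : ℝ := (inner ℝ h' (Y ω) : ℝ) with hc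
      have htend : Tendsto (fun k => (inner ℝ (g (φ k)) (Y ω) : ℝ)) atTop (𝓝 c) :=
        hconv.inner tendsto_const_nhds
      have hc2 : c/2 < 0 := by linarith
      have hcc : c < c/2 := by linarith
      have hev1 : ∀ᶠ k in atTop, (inner ℝ (g (φ k)) (Y ω) : ℝ) < c/2 :=
        htend.eventually_lt_const hcc
      obtain ⟨K0, hK0⟩ := exists_nat_gt ((-(c/2))⁻¹)
      have hev2 : ∀ᶠ k in atTop, (1:ℝ)/(φ k + 1) < -(c/2) := by
        filter_upwards [eventually_ge_atTop K0] with k hk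
        have h2 : (K0:ℝ) ≤ (φ k : ℝ) := by
          exact_mod_cast le_trans hk hφ.le_apply
        rw [div_lt_iff₀ (by positivity)]
        have hinv : (-(c/2))⁻¹ < K0 := hK0
        have hpos : (0:ℝ) < -(c/2) := by linarith
        rw [inv_lt_iff_one_lt_mul₀ hpos] at hinv
        nlinarith
      obtain ⟨K, hK⟩ := (hev1.and hev2).exists_forall_of_atTop
      refine mem_iUnion.mpr ⟨K, ?_⟩
      refine mem_biInter fun k hk => ?_
      have := hK k hk
      simp only [hB, mem_setOf_eq]
      linarith [this.1, this.2]
    refine le_antisymm ?_ (by simp)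
    calc P {ω | (inner ℝ h' (Y ω) : ℝ) < 0} ≤ P (⋃ K : ℕ, ⋂ k ∈ Ici K, B k) :=
          measure_mono hsub
      _ = 0 := measure_iUnion_null fun K => htail K
  -- contradiction with the no-arbitrage hypothesis at `h'`
  obtain ⟨P, hPQ, hlt⟩ := hNA h' h'D h'ne
  haveI : IsProbabilityMeasure P := h𝒬prob P hPQ
  have hmeas : MeasurableSet {ω | 0 ≤ (inner ℝ h' (Y ω) : ℝ)} := by
    have : Measurable fun ω => (inner ℝ h' (Y ω) : ℝ) := (measurable_const.inner hY)
    exact this measurableSet_Ici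
  have hcompl : {ω | 0 ≤ (inner ℝ h' (Y ω) : ℝ)}ᶜ = {ω | (inner ℝ h' (Y ω) : ℝ) < 0} := by
    ext ω; simp [not_le]
  have : P {ω | 0 ≤ (inner ℝ h' (Y ω) : ℝ)} = 1 := by
    rw [← prob_compl_eq_zero_iff hmeas, hcompl]
    exact hnull P hPQ
  rw [this] at hlt
  exact lt_irrefl _ hlt
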